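/- arXiv:math/0508034 — 2 statements merged into one kernel-verified Lean document; each statement's English description precedes it below -/
import Mathlib

section
/- Let m be odd and let d be an integer with gcd(d, 2^m - 1) = 1 such that the power function x ↦ x^d on F = GF(2^m) is maximum nonlinear. Then for all α, β ∈ F \ {0} with α ≠ β and all i, j ∈ GF(2), there exists an integer h with -3 ≤ h ≤ 3 such that 8 · |H^{i,j}(α,β) ∩ D_d| = 2^m + h · 2^((m+1)/2) (equivalently, for m ≥ 5 the cardinality |H^{i,j}(α,β) ∩ D_d| lies in the set {2^(m-3) + h·2^((m-5)/2) : h ∈ ℤ, -3 ≤ h ≤ 3}). -/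
attribute [local instance] Classical.propDecidable

noncomputable instance (m : ℕ) : Fintype (GaloisField 2 m) := Fintype.ofFinite _

/-- The absolute trace map from `GF(2^m)` to `GF(2)`. -/
noncomputable def tr (m : ℕ) (x : GaloisField 2 m) : ZMod 2 :=
  Algebra.trace (ZMod 2) (GaloisField 2 m) x

/-- `(-1)^t` as an integer, for `t ∈ GF(2)`. -/
def chi (t : ZMod 2) : ℤ := (-1) ^ t.val

/-- The Walsh coefficient `∑_{x ∈ F} (-1)^(tr(γx + βx^d))` of the power map `x ↦ x^d`. -/
noncomputable def walsh (m d : ℕ) (β γ : GaloisField 2 m) : ℤ :=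
  ∑ x : GaloisField 2 m, chi (tr m (γ * x + β * x ^ d))

/-- The power function `x ↦ x^d` on `GF(2^m)` is maximum nonlinear (almost bent). -/
def MaxNonlinear (m d : ℕ) : Prop :=
  ∀ β : GaloisField 2 m, β ≠ 0 → ∀ γ : GaloisField 2 m,
    walsh m d β γ ∈ ({0, 2 ^ ((m + 1) / 2), -(2 ^ ((m + 1) / 2))} : Set ℤ)

/-- `D_d = {x ∈ F : tr(x^d) = 1}`. -/
noncomputable def Dd (m d : ℕ) : Finset (GaloisField 2 m) :=
  Finset.univ.filter (fun x => tr m (x ^ d) = 1)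

/-- `H^i(α) = {x ∈ F : tr(αx) = i}`. -/
noncomputable def Hi (m : ℕ) (α : GaloisField 2 m) (i : ZMod 2) :
    Finset (GaloisField 2 m) :=
  Finset.univ.filter (fun x => tr m (α * x) = i)

/-- `H^{i,j}(α,β) = {x ∈ F : tr(αx) = i and tr(βx) = j}`. -/
noncomputable def Hij (m : ℕ) (α β : GaloisField 2 m) (i j : ZMod 2) :
    Finset (GaloisField 2 m) :=
  Finset.univ.filter (fun x => tr m (α * x) = i ∧ tr m (β * x) = j)

lemma zmod2_cases : ∀ t : ZMod 2, t = 0 ∨ t = 1 := by decide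

lemma chi_add_one : ∀ t : ZMod 2, chi (t + 1) = - chi t := by decide

lemma tr_add (m : ℕ) (x y : GaloisField 2 m) : tr m (x + y) = tr m x + tr m y := by
  simp [tr]

lemma card_gf (m : ℕ) (hm : m ≠ 0) : Fintype.card (GaloisField 2 m) = 2 ^ m := by
  rw [Fintype.card_eq_nat_card, GaloisField.card 2 m hm]

lemma sum_chi (m : ℕ) (γ : GaloisField 2 m) (hγ : γ ≠ 0) :
    ∑ x : GaloisField 2 m, chi (tr m (γ * x)) = 0 := by
  obtain ⟨c, hc⟩ := Algebra.trace_surjective (ZMod 2) (GaloisField 2 m) 1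
  set a := γ⁻¹ * c with ha
  have hγa : tr m (γ * a) = 1 := by
    rw [ha, ← mul_assoc, mul_inv_cancel₀ hγ, one_mul]; exact hc
  have key : ∑ x : GaloisField 2 m, chi (tr m (γ * (x + a)))
      = ∑ x : GaloisField 2 m, chi (tr m (γ * x)) :=
    Fintype.sum_bijective (· + a) (Equiv.addRight a).bijective _ _ (fun x => rfl)
  have key2 : ∀ x : GaloisField 2 m, chi (tr m (γ * (x + a))) = - chi (tr m (γ * x)) := by
    intro x
    rw [mul_add, tr_add, hγa, chi_add_one]
  rw [Finset.sum_congr rfl (fun x _ => key2 x), Finset.sum_neg_distrib] at key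
  linarith

lemma sum_chi_pow (m d : ℕ) (hm2 : 2 ≤ m) (hgcd : Nat.gcd d (2 ^ m - 1) = 1) :
    ∑ x : GaloisField 2 m, chi (tr m (x ^ d)) = 0 := by
  have hm : m ≠ 0 := by omega
  have h4 : 4 ≤ 2 ^ m := by
    calc (4:ℕ) = 2 ^ 2 := by norm_num
    _ ≤ 2 ^ m := Nat.pow_le_pow_right (by norm_num) hm2
  set N := 2 ^ m - 1 with hN
  have hN1 : 1 < N := by omega
  have hd0 : d ≠ 0 := by
    rintro rfl
    rw [Nat.gcd_zero_left] at hgcd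
    omega
  have hcop : Nat.Coprime d N := hgcd
  have htpos : 0 < N.totient := Nat.totient_pos.mpr (by omega)
  set e := d ^ (N.totient - 1) with he
  have hde : d * e ≡ 1 [MOD N] := by
    have h1 : d * e = d ^ N.totient := by
      rw [he, ← pow_succ']
      congr 1
      omega
    rw [h1]
    exact Nat.ModEq.pow_totient hcop
  have hmod : (d * e) % N = 1 := by
    have h2 : (d * e) % N = 1 % N := hde
    rw [h2, Nat.mod_eq_of_lt hN1]
  have hdk : d * e = N * (d * e / N) + 1 := by
    have := Nat.div_add_mod (d * e) N
    omega
  have hcard : Fintype.card (GaloisField 2 m) = 2 ^ m := card_gf m hm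
  have hli : ∀ x : GaloisField 2 m, (x ^ d) ^ e = x := by
    intro x
    by_cases hx : x = 0
    · subst hx
      rw [zero_pow hd0, zero_pow]
      rw [he]
      exact pow_ne_zero _ hd0
    · have hpow1 : x ^ N = 1 := by
        have := FiniteField.pow_card_sub_one_eq_one x hx
        rwa [hcard] at this
      rw [← pow_mul, hdk, pow_add, pow_one, pow_mul, hpow1, one_pow, one_mul]
  have hbij : Function.Bijective (fun x : GaloisField 2 m => x ^ d) := by
    have hinj : Function.Injective (fun x : GaloisField 2 m => x ^ d) := by
      intro x y hxy
      simp only at hxy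
      calc x = (x ^ d) ^ e := (hli x).symm
      _ = (y ^ d) ^ e := by rw [hxy]
      _ = y := hli y
    exact Finite.injective_iff_bijective.mp hinj
  calc ∑ x : GaloisField 2 m, chi (tr m (x ^ d))
      = ∑ x : GaloisField 2 m, chi (tr m x) :=
        Fintype.sum_bijective _ hbij _ _ (fun x => rfl)
    _ = ∑ x : GaloisField 2 m, chi (tr m (1 * x)) := by simp
    _ = 0 := sum_chi m 1 one_ne_zero

lemma chi_expand (a b c i j : ZMod 2) :
    (8:ℤ) * (if a = i ∧ b = j ∧ c = 1 then 1 else 0)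
      = 1 + chi i * chi a + chi j * chi b + chi i * chi j * chi (a + b)
        - chi c - chi i * chi (a + c) - chi j * chi (b + c)
        - chi i * chi j * chi (a + b + c) := by
  split <;> rename_i h <;> revert h <;> revert a b c i j <;> decide

lemma chi_pm : ∀ t : ZMod 2, chi t = 1 ∨ chi t = -1 := by decide

/-- For a maximum nonlinear power map `x ↦ x^d` on `GF(2^m)` (`m` odd,
`gcd(d, 2^m - 1) = 1`), every intersection of `D_d` with a codimension-2 subspace
`H^{i,j}(α,β)` has size satisfying `8·|H^{i,j}(α,β) ∩ D_d| = 2^m + h·2^((m+1)/2)` for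
some integer `h` with `-3 ≤ h ≤ 3`. -/
theorem stmt2 (m : ℕ) (hmodd : Odd m) (d : ℕ) (hgcd : Nat.gcd d (2 ^ m - 1) = 1)
    (hmax : MaxNonlinear m d) :
    ∀ α β : GaloisField 2 m, α ≠ 0 → β ≠ 0 → α ≠ β → ∀ i j : ZMod 2,
      ∃ h : ℤ, -3 ≤ h ∧ h ≤ 3 ∧
        8 * ((Hij m α β i j ∩ Dd m d).card : ℤ) = 2 ^ m + h * 2 ^ ((m + 1) / 2) := by
  intro α β hα hβ hαβ i j
  have hm : m ≠ 0 := by rintro rfl; exact (Nat.not_odd_iff_even.mpr Even.zero) hmodd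
  by_cases hm1 : m = 1
  · exfalso
    subst hm1
    have hcard : Fintype.card (GaloisField 2 1) = 2 := by rw [card_gf 1 one_ne_zero]; norm_num
    have h1 : α = 1 := by
      have := FiniteField.pow_card_sub_one_eq_one α hα
      rw [hcard] at this
      simpa using this
    have h2 : β = 1 := by
      have := FiniteField.pow_card_sub_one_eq_one β hβ
      rw [hcard] at this
      simpa using this
    exact hαβ (h1.trans h2.symm)
  have hm2 : 2 ≤ m := by omega
  have hab : α + β ≠ 0 := by
    intro h0
    apply hαβ
    have hb : β + β = 0 := CharTwo.add_self_eq_zero β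
    linear_combination h0 - hb
  set K : ℤ := 2 ^ ((m + 1) / 2) with hK
  -- extract Walsh coefficients
  have extract : ∀ γ : GaloisField 2 m, ∃ e : ℤ, -1 ≤ e ∧ e ≤ 1 ∧
      (∑ x : GaloisField 2 m, chi (tr m (γ * x + x ^ d))) = e * K := by
    intro γ
    have hw : walsh m d 1 γ = ∑ x : GaloisField 2 m, chi (tr m (γ * x + x ^ d)) := by
      unfold walsh; simp
    have := hmax 1 one_ne_zero γ
    simp only [Set.mem_insert_iff, Set.mem_singleton_iff] at this
    rcases this with h | h | h
    · exact ⟨0, by norm_num, by norm_num, by rw [← hw, h]; ring⟩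
    · exact ⟨1, by norm_num, by norm_num, by rw [← hw, h, hK]; ring⟩
    · exact ⟨-1, by norm_num, by norm_num, by rw [← hw, h, hK]; ring⟩
  obtain ⟨ea, hea1, hea2, hWa⟩ := extract α
  obtain ⟨eb, heb1, heb2, hWb⟩ := extract β
  obtain ⟨ec, hec1, hec2, hWc⟩ := extract (α + β)
  have hA : ∑ x : GaloisField 2 m, chi (tr m (α * x)) = 0 := sum_chi m α hα
  have hB : ∑ x : GaloisField 2 m, chi (tr m (β * x)) = 0 := sum_chi m β hβ
  have hC : ∑ x : GaloisField 2 m, chi (tr m ((α + β) * x)) = 0 := sum_chi m (α + β) hab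
  have hT0 : ∑ x : GaloisField 2 m, chi (tr m (x ^ d)) = 0 := sum_chi_pow m d hm2 hgcd
  -- cardinality as a sum
  have hfil : Hij m α β i j ∩ Dd m d = Finset.univ.filter
      (fun x : GaloisField 2 m => tr m (α * x) = i ∧ tr m (β * x) = j ∧ tr m (x ^ d) = 1) := by
    ext x
    simp [Hij, Dd, and_assoc]
  have hcard : ((Hij m α β i j ∩ Dd m d).card : ℤ)
      = ∑ x : GaloisField 2 m,
          (if tr m (α * x) = i ∧ tr m (β * x) = j ∧ tr m (x ^ d) = 1 then (1:ℤ) else 0) := by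
    rw [hfil, Finset.card_filter]
    push_cast
    rfl
  -- main expansion
  have hsum : (8:ℤ) * ((Hij m α β i j ∩ Dd m d).card : ℤ)
      = ∑ x : GaloisField 2 m,
          (1 + chi i * chi (tr m (α * x)) + chi j * chi (tr m (β * x))
            + chi i * chi j * chi (tr m ((α + β) * x))
            - chi (tr m (x ^ d)) - chi i * chi (tr m (α * x + x ^ d))
            - chi j * chi (tr m (β * x + x ^ d))
            - chi i * chi j * chi (tr m ((α + β) * x + x ^ d))) := by
    rw [hcard, Finset.mul_sum]
    refine Finset.sum_congr rfl (fun x _ => ?_)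
    have h1 : tr m ((α + β) * x) = tr m (α * x) + tr m (β * x) := by
      rw [add_mul, tr_add]
    have h2 : tr m (α * x + x ^ d) = tr m (α * x) + tr m (x ^ d) := tr_add m _ _
    have h3 : tr m (β * x + x ^ d) = tr m (β * x) + tr m (x ^ d) := tr_add m _ _
    have h4 : tr m ((α + β) * x + x ^ d) = tr m (α * x) + tr m (β * x) + tr m (x ^ d) := by
      rw [tr_add, h1]
    rw [h1, h2, h3, h4]
    exact chi_expand _ _ _ i j
  have hsplit : (8:ℤ) * ((Hij m α β i j ∩ Dd m d).card : ℤ)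
      = (Fintype.card (GaloisField 2 m) : ℤ)
        + chi i * (∑ x : GaloisField 2 m, chi (tr m (α * x)))
        + chi j * (∑ x : GaloisField 2 m, chi (tr m (β * x)))
        + chi i * chi j * (∑ x : GaloisField 2 m, chi (tr m ((α + β) * x)))
        - (∑ x : GaloisField 2 m, chi (tr m (x ^ d)))
        - chi i * (∑ x : GaloisField 2 m, chi (tr m (α * x + x ^ d)))
        - chi j * (∑ x : GaloisField 2 m, chi (tr m (β * x + x ^ d)))
        - chi i * chi j * (∑ x : GaloisField 2 m, chi (tr m ((α + β) * x + x ^ d))) := by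
    rw [hsum]
    simp only [Finset.sum_sub_distrib, Finset.sum_add_distrib, ← Finset.mul_sum,
      Finset.sum_const, Finset.card_univ, nsmul_eq_mul, mul_one]
    try ring
  have hfinal : (8:ℤ) * ((Hij m α β i j ∩ Dd m d).card : ℤ)
      = 2 ^ m + (-(chi i * ea + chi j * eb + chi i * chi j * ec)) * K := by
    rw [hsplit, hA, hB, hC, hT0, hWa, hWb, hWc, card_gf m hm]
    push_cast
    ring
  refine ⟨-(chi i * ea + chi j * eb + chi i * chi j * ec), ?_, ?_, hfinal⟩ <;>
    clear hfinal hsplit hsum hcard hfil hA hB hC hT0 hWa hWb hWc hmax extract <;>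
      rcases chi_pm i with hci | hci <;> rcases chi_pm j with hcj | hcj <;>
        rw [hci, hcj] <;> nlinarith
end

section
/- Let m be odd and let d be an odd integer with 2 ≤ d ≤ 2^m - 2. If the binary weight of d (the number of ones in the binary representation of d) is not a power of 2, then there exists x ∈ GF(2^m) with tr(x^d + (x+1)^d + 1) ≠ 0. -/
attribute [local instance] Classical.propDecidable

open Finset


/-- binary weight -/
def wt (n : ℕ) : ℕ := (Nat.digits 2 n).sum

lemma wt_zero : wt 0 = 0 := by simp [wt]

lemma wt_eq (n : ℕ) : wt n = n % 2 + wt (n / 2) := by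
  rcases Nat.eq_zero_or_pos n with h | h
  · simp [h, wt]
  · rw [wt, Nat.digits_def' (by norm_num) h]; simp [wt]

lemma wt_two_mul (n : ℕ) : wt (2 * n) = wt n := by
  rw [wt_eq (2 * n)]; simp [Nat.mul_div_cancel_left, Nat.mul_mod_right]

lemma wt_two_mul_add_one (n : ℕ) : wt (2 * n + 1) = wt n + 1 := by
  rw [wt_eq (2 * n + 1)]
  have h1 : (2 * n + 1) % 2 = 1 := by omega
  have h2 : (2 * n + 1) / 2 = n := by omega
  rw [h1, h2]; ring

lemma wt_eq_zero {n : ℕ} (h : wt n = 0) : n = 0 := by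
  induction n using Nat.strong_induction_on with
  | _ n ih =>
    rcases Nat.eq_zero_or_pos n with h0 | h0
    · exact h0
    · rw [wt_eq] at h
      have h2 : wt (n / 2) = 0 := by omega
      have := ih (n / 2) (by omega) h2
      omega

/-- adding a high power of two adds one to the weight -/
lemma wt_add_pow (t : ℕ) : ∀ a < 2 ^ t, wt (a + 2 ^ t) = wt a + 1 := by
  induction t with
  | zero => intro a ha; interval_cases a; simp [wt]
  | succ t ih =>
    intro a ha
    have h2 : a / 2 < 2 ^ t := by rw [pow_succ] at ha; omega
    have h3 : (a + 2 ^ (t + 1)) % 2 = a % 2 := by rw [pow_succ]; omega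
    have h4 : (a + 2 ^ (t + 1)) / 2 = a / 2 + 2 ^ t := by rw [pow_succ]; omega
    rw [wt_eq (a + 2 ^ (t+1)), h3, h4, ih _ h2, wt_eq a]; ring

/-- one cyclic shift mod 2^m - 1 preserves weight and range -/
lemma shift_step {m : ℕ} (hm : 1 ≤ m) {j : ℕ} (h1 : 1 ≤ j) (h2 : j ≤ 2 ^ m - 2) :
    1 ≤ (2 * j) % (2 ^ m - 1) ∧ (2 * j) % (2 ^ m - 1) ≤ 2 ^ m - 2 ∧
      wt ((2 * j) % (2 ^ m - 1)) = wt j := by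
  have hp : 2 ≤ 2 ^ m := by
    calc 2 = 2 ^ 1 := by norm_num
    _ ≤ 2 ^ m := Nat.pow_le_pow_right (by norm_num) hm
  set n := 2 ^ m - 1 with hn
  rcases lt_or_ge (2 * j) n with h | h
  · rw [Nat.mod_eq_of_lt h]
    exact ⟨by omega, by omega, wt_two_mul j⟩
  · have hlt : 2 * j - n < n := by omega
    have hmod : (2 * j) % n = 2 * j - n := by
      rw [Nat.mod_eq_sub_mod h, Nat.mod_eq_of_lt hlt]
    have hj : 2 ^ (m - 1) ≤ j := by
      have : 2 ^ m = 2 * 2 ^ (m - 1) := by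
        rw [← pow_succ']; congr 1; omega
      omega
    have hjlt : j - 2 ^ (m - 1) < 2 ^ (m - 1) := by
      have : 2 ^ m = 2 * 2 ^ (m - 1) := by rw [← pow_succ']; congr 1; omega
      omega
    have hsub : 2 * j - n = 2 * (j - 2 ^ (m - 1)) + 1 := by
      have : 2 ^ m = 2 * 2 ^ (m - 1) := by rw [← pow_succ']; congr 1; omega
      omega
    have hwj : wt j = wt (j - 2 ^ (m - 1)) + 1 := by
      have := wt_add_pow (m - 1) (j - 2 ^ (m - 1)) hjlt
      rw [Nat.sub_add_cancel hj] at this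
      exact this
    rw [hmod, hsub, wt_two_mul_add_one, ← hwj]
    refine ⟨by omega, by omega, rfl⟩

/-- iterated: multiplying by 2^k mod 2^m-1 preserves weight and range -/
lemma shift_pow {m : ℕ} (hm : 1 ≤ m) {j : ℕ} (h1 : 1 ≤ j) (h2 : j ≤ 2 ^ m - 2) (k : ℕ) :
    1 ≤ (j * 2 ^ k) % (2 ^ m - 1) ∧ (j * 2 ^ k) % (2 ^ m - 1) ≤ 2 ^ m - 2 ∧
      wt ((j * 2 ^ k) % (2 ^ m - 1)) = wt j := by
  induction k with
  | zero =>
    have h : j * 2 ^ 0 % (2 ^ m - 1) = j := by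
      simp [Nat.mod_eq_of_lt (show j < 2 ^ m - 1 by omega)]
    rw [h]
    exact ⟨h1, h2, rfl⟩
  | succ k ih =>
    obtain ⟨i1, i2, i3⟩ := ih
    have key : (j * 2 ^ (k + 1)) % (2 ^ m - 1) = (2 * ((j * 2 ^ k) % (2 ^ m - 1))) % (2 ^ m - 1) := by
      rw [show j * 2 ^ (k + 1) = 2 * (j * 2 ^ k) by ring]
      conv_lhs => rw [Nat.mul_mod]
      conv_rhs => rw [Nat.mul_mod]
      simp
    obtain ⟨s1, s2, s3⟩ := shift_step hm i1 i2
    rw [key]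
    exact ⟨s1, s2, by rw [s3, i3]⟩

lemma lucas2 (d j : ℕ) :
    Nat.choose d j % 2 = Nat.choose (d % 2) (j % 2) * Nat.choose (d / 2) (j / 2) % 2 :=
  haveI : Fact (Nat.Prime 2) := ⟨Nat.prime_two⟩
  Choose.choose_modEq_choose_mod_mul_choose_div_nat

/-- odd binomial coefficient at the 2-adic valuation -/
lemma choose_pow_odd {b : ℕ} (hb : Odd b) : ∀ a : ℕ, Nat.choose (2 ^ a * b) (2 ^ a) % 2 = 1 := by
  intro a
  induction a with
  | zero =>
    simp only [pow_zero, one_mul, Nat.choose_one_right]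
    exact Nat.odd_iff.mp hb
  | succ a ih =>
    rw [lucas2]
    have h1 : 2 ^ (a + 1) * b % 2 = 0 := by
      rw [show 2 ^ (a + 1) * b = 2 * (2 ^ a * b) by ring]; exact Nat.mul_mod_right 2 _
    have h2 : (2 : ℕ) ^ (a + 1) % 2 = 0 := by
      rw [show (2:ℕ) ^ (a + 1) = 2 * 2 ^ a by ring]; exact Nat.mul_mod_right 2 _
    have h3 : 2 ^ (a + 1) * b / 2 = 2 ^ a * b := by
      rw [show 2 ^ (a + 1) * b = 2 * (2 ^ a * b) by ring]
      exact Nat.mul_div_cancel_left _ (by norm_num)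
    have h4 : (2 : ℕ) ^ (a + 1) / 2 = 2 ^ a := by
      rw [show (2:ℕ) ^ (a + 1) = 2 * 2 ^ a by ring]
      exact Nat.mul_div_cancel_left _ (by norm_num)
    rw [h1, h2, h3, h4]
    simpa using ih

/-- there is an odd binomial coefficient in the middle when w is not a power of two -/
lemma exists_odd_choose {w : ℕ} (hw0 : w ≠ 0) (hw : ¬ ∃ n : ℕ, w = 2 ^ n) :
    ∃ r, 0 < r ∧ r < w ∧ Nat.choose w r % 2 = 1 := by
  obtain ⟨a, b, hb, rfl⟩ := Nat.exists_eq_two_pow_mul_odd hw0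
  have hb1 : b ≠ 1 := by
    rintro rfl
    exact hw ⟨a, by ring⟩
  have hb3 : 3 ≤ b := by
    rcases hb with ⟨c, rfl⟩; omega
  refine ⟨2 ^ a, (by positivity) , ?_, choose_pow_odd hb a⟩
  have : 2 ^ a * 1 < 2 ^ a * b :=
    mul_lt_mul_of_pos_left (by omega) (by positivity)
  omega

/-- split a sum over range (2*n) by parity -/
lemma sum_range_two_mul {M : Type*} [AddCommMonoid M] (n : ℕ) (f : ℕ → M) :
    ∑ j ∈ Finset.range (2 * n), f j = ∑ i ∈ Finset.range n, (f (2 * i) + f (2 * i + 1)) := by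
  induction n with
  | zero => simp
  | succ n ih =>
    rw [Finset.sum_range_succ, ← ih, show 2 * (n + 1) = 2 * n + 1 + 1 by ring,
      Finset.sum_range_succ, Finset.sum_range_succ]
    abel

/-- counting submasks of each weight -/
lemma count_submasks (d : ℕ) : ∀ r : ℕ,
    (∑ j ∈ Finset.range (d + 1),
      if Nat.choose d j % 2 = 1 ∧ wt j = r then 1 else 0) = Nat.choose (wt d) r := by
  induction d using Nat.strong_induction_on with
  | _ d ih =>
    intro r
    rcases Nat.eq_zero_or_pos d with rfl | hd
    · rw [Finset.range_one, Finset.sum_singleton, wt_zero]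
      rcases Nat.eq_zero_or_pos r with rfl | hr
      · norm_num
      · rw [if_neg (by rintro ⟨-, h⟩; omega), Nat.choose_eq_zero_of_lt hr]
    set e := d / 2 with he
    have hed : e < d := Nat.div_lt_self hd (by norm_num)
    have h2i : ∀ i : ℕ, (2 * i) % 2 = 0 := fun i => Nat.mul_mod_right 2 i
    have h2id : ∀ i : ℕ, (2 * i) / 2 = i := fun i => Nat.mul_div_cancel_left i (by norm_num)
    have h2i1 : ∀ i : ℕ, (2 * i + 1) % 2 = 1 := fun i => by omega
    have h2i1d : ∀ i : ℕ, (2 * i + 1) / 2 = i := fun i => by omega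
    have heven : ∀ i, Nat.choose d (2 * i) % 2 = Nat.choose e i % 2 := by
      intro i
      rw [lucas2, h2i, h2id, Nat.choose_zero_right, one_mul]
    have hodd : ∀ i, Nat.choose d (2 * i + 1) % 2 = (d % 2) * Nat.choose e i % 2 := by
      intro i
      rw [lucas2, h2i1, h2i1d]
      congr 2
      rcases Nat.mod_two_eq_zero_or_one d with h | h <;> simp [h]
    rcases Nat.mod_two_eq_zero_or_one d with hpar | hpar
    · -- d even, d = 2 * e, e ≥ 1
      have hde : d = 2 * e := by omega
      have hwt : wt d = wt e := by rw [hde, wt_two_mul]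
      have hrange : d + 1 = 2 * e + 1 := by omega
      rw [hrange, Finset.sum_range_succ, sum_range_two_mul]
      have hz : ∀ i, (if Nat.choose d (2 * i + 1) % 2 = 1 ∧ wt (2 * i + 1) = r then 1 else 0) = 0 := by
        intro i
        rw [if_neg]
        rintro ⟨h1, -⟩
        rw [hodd i, hpar, zero_mul] at h1
        simp at h1
      have hterm : ∀ i, (if Nat.choose d (2 * i) % 2 = 1 ∧ wt (2 * i) = r then 1 else 0)
          = (if Nat.choose e i % 2 = 1 ∧ wt i = r then 1 else 0) := by
        intro i
        rw [heven i, wt_two_mul]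
      simp only [hz, add_zero, hterm]
      rw [← Finset.sum_range_succ, ih e hed r, hwt]
    · -- d odd, d = 2 * e + 1
      have hde : d = 2 * e + 1 := by omega
      have hwt : wt d = wt e + 1 := by rw [hde, wt_two_mul_add_one]
      have hrange : d + 1 = 2 * (e + 1) := by omega
      rw [hrange, sum_range_two_mul, Finset.sum_add_distrib]
      have hterm : ∀ i, (if Nat.choose d (2 * i) % 2 = 1 ∧ wt (2 * i) = r then 1 else 0)
          = (if Nat.choose e i % 2 = 1 ∧ wt i = r then 1 else 0) := by
        intro i
        rw [heven i, wt_two_mul]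
      have hterm1 : ∀ i, (if Nat.choose d (2 * i + 1) % 2 = 1 ∧ wt (2 * i + 1) = r then 1 else 0)
          = (if Nat.choose e i % 2 = 1 ∧ wt i + 1 = r then 1 else 0) := by
        intro i
        rw [hodd i, hpar, one_mul, wt_two_mul_add_one]
      simp only [hterm, hterm1]
      rw [ih e hed r, hwt]
      rcases Nat.eq_zero_or_pos r with rfl | hr
      · have : ∀ i, (if Nat.choose e i % 2 = 1 ∧ wt i + 1 = 0 then 1 else 0) = 0 := by
          intro i; rw [if_neg]; rintro ⟨-, h⟩; omega
        simp only [this, Finset.sum_const_zero, add_zero]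
        simp
      · obtain ⟨r', rfl⟩ : ∃ r', r = r' + 1 := ⟨r - 1, by omega⟩
        have : ∀ i, (if Nat.choose e i % 2 = 1 ∧ wt i + 1 = r' + 1 then 1 else 0)
            = (if Nat.choose e i % 2 = 1 ∧ wt i = r' then 1 else 0) := by
          intro i
          congr 1
          simp only [eq_iff_iff]
          constructor <;> (rintro ⟨a, b⟩; exact ⟨a, by omega⟩)
        rw [Finset.sum_congr rfl (fun i _ => this i), ih e hed r']
        rw [Nat.choose_succ_succ' (wt e) r']
        omega


section Frob
variable (m : ℕ)

/-- Frobenius as an algebra equivalence of `GF(2^m)` over `GF(2)`. -/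
noncomputable def frobAE : GaloisField 2 m ≃ₐ[ZMod 2] GaloisField 2 m :=
  AlgEquiv.ofRingEquiv (f := frobeniusEquiv (GaloisField 2 m) 2)
    (fun x => by
      rw [frobeniusEquiv_apply, frobenius_def, ← map_pow]
      congr 1
      exact ZMod.pow_card x)

lemma frobAE_apply (x : GaloisField 2 m) : frobAE m x = x ^ 2 := rfl

lemma frobAE_pow_apply (k : ℕ) (x : GaloisField 2 m) : (frobAE m ^ k) x = x ^ 2 ^ k := by
  induction k with
  | zero => simp
  | succ k ih =>
    rw [pow_succ', AlgEquiv.mul_apply, frobAE_apply, ih, ← pow_mul, ← pow_succ]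

lemma card_F (hm : m ≠ 0) : Fintype.card (GaloisField 2 m) = 2 ^ m := by
  rw [← Nat.card_eq_fintype_card, GaloisField.card 2 m hm]

lemma frobAE_pow_injOn (hm : m ≠ 0) :
    Set.InjOn (fun k => frobAE m ^ k) (Finset.range m) := by
  -- if frobAE^i = frobAE^j with i < j < m then x^(2^i) = x^(2^j) for all x
  have key : ∀ i j : ℕ, i < j → j < m → (frobAE m ^ i) ≠ (frobAE m ^ j) := by
    intro i j hij hjm heq
    have hev : ∀ x : GaloisField 2 m, x ^ 2 ^ j - x ^ 2 ^ i = 0 := by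
      intro x
      have h1 := frobAE_pow_apply m i x
      have h2 := frobAE_pow_apply m j x
      rw [heq] at h1
      rw [← h1, h2, sub_self]
    set p : Polynomial (GaloisField 2 m) :=
      Polynomial.X ^ 2 ^ j - Polynomial.X ^ 2 ^ i with hp
    have hpe : ∀ x : GaloisField 2 m, p.eval x = 0 := by
      intro x; simp [hp, hev x]
    have hdeg : p.natDegree < Fintype.card (GaloisField 2 m) := by
      have h1 : p.natDegree ≤ 2 ^ j := by
        apply le_trans (Polynomial.natDegree_sub_le _ _)
        simp [Polynomial.natDegree_X_pow]
        exact le_of_lt (Nat.pow_lt_pow_right (by norm_num) hij)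
      rw [card_F m hm]
      have : 2 ^ j < 2 ^ m := Nat.pow_lt_pow_right (by norm_num) hjm
      omega
    have hp0 : p = 0 :=
      Polynomial.eq_zero_of_natDegree_lt_card_of_eval_eq_zero p
        Function.injective_id (fun x => hpe x) (by simpa using hdeg)
    have : p.coeff (2 ^ j) = 1 := by
      rw [hp]
      rw [Polynomial.coeff_sub, Polynomial.coeff_X_pow, Polynomial.coeff_X_pow]
      have hne : 2 ^ i ≠ 2 ^ j := by
        intro h
        exact absurd (Nat.pow_right_injective (le_refl 2) h) (by omega)
      rw [if_pos rfl, if_neg (by exact fun h => hne (by omega))]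
      ring
    rw [hp0] at this
    simp at this
  intro i hi j hj hij
  simp only [Finset.coe_range, Set.mem_Iio] at hi hj
  by_contra hne
  rcases lt_or_gt_of_ne hne with h | h
  · exact key i j h hj hij
  · exact key j i h hi hij.symm

lemma trace_form (hm : m ≠ 0) (y : GaloisField 2 m) :
    algebraMap (ZMod 2) (GaloisField 2 m) (tr m y) = ∑ k ∈ Finset.range m, y ^ 2 ^ k := by
  rw [tr, trace_eq_sum_automorphisms]
  have hcard : Fintype.card (GaloisField 2 m ≃ₐ[ZMod 2] GaloisField 2 m) = m := by
    rw [← Nat.card_eq_fintype_card, IsGalois.card_aut_eq_finrank, GaloisField.finrank 2 hm]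
  have himg : (Finset.range m).image (fun k => frobAE m ^ k) = Finset.univ := by
    apply Finset.eq_univ_of_card
    rw [Finset.card_image_of_injOn (frobAE_pow_injOn m hm), Finset.card_range, hcard]
  rw [← himg, Finset.sum_image (fun i hi j hj h => frobAE_pow_injOn m hm hi hj h)]
  exact Finset.sum_congr rfl (fun k _ => frobAE_pow_apply m k y)

lemma tr_eq_zero_iff (hm : m ≠ 0) (y : GaloisField 2 m) :
    tr m y = 0 ↔ ∑ k ∈ Finset.range m, y ^ 2 ^ k = 0 := by
  rw [← trace_form m hm y]
  constructor
  · intro h; rw [h, map_zero]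
  · intro h
    have := (algebraMap (ZMod 2) (GaloisField 2 m)).injective
    exact this (by rw [h, map_zero])

end Frob

/-- If `m` is odd, `d` is odd with `2 ≤ d ≤ 2^m - 2`, and the binary weight
of `d` is not a power of `2`, then `tr(x^d + (x+1)^d + 1) ≠ 0` for some `x ∈ GF(2^m)`. -/
theorem stmt15 (m : ℕ) (hmodd : Odd m) (d : ℕ) (hdodd : Odd d)
    (hd2 : 2 ≤ d) (hdle : d ≤ 2 ^ m - 2)
    (hw : ¬ ∃ n : ℕ, (Nat.digits 2 d).sum = 2 ^ n) :
    ∃ x : GaloisField 2 m, tr m (x ^ d + (x + 1) ^ d + 1) ≠ 0 := by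
  by_contra hcon
  push_neg at hcon
  -- basic numerics
  have hpm : 4 ≤ 2 ^ m := by omega
  have hm : m ≠ 0 := by
    rintro rfl; norm_num at hpm
  have hm1 : 1 ≤ m := Nat.one_le_iff_ne_zero.mpr hm
  set F := GaloisField 2 m with hF
  haveI : CharP F 2 := inferInstanceAs (CharP (GaloisField 2 m) 2)
  have hcast2 : ((2 : ℕ) : F) = 0 := by
    exact_mod_cast CharP.cast_eq_zero F 2
  have hcast : ∀ c : ℕ, (c : F) = if c % 2 = 1 then 1 else 0 := by
    intro c
    conv_lhs => rw [← Nat.mod_add_div c 2]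
    push_cast
    rw [(CharP.cast_eq_zero_iff F 2 _).mpr (Nat.dvd_mul_right 2 _), add_zero]
    rcases Nat.mod_two_eq_zero_or_one c with h | h <;> simp [h]
  -- the weight of d
  set w := wt d with hwdef
  have hw2 : ¬ ∃ n : ℕ, w = 2 ^ n := hw
  have hw0 : w ≠ 0 := fun h => by have := wt_eq_zero h; omega
  obtain ⟨r, hr0, hrw, hrodd⟩ := exists_odd_choose hw0 hw2
  -- the index set
  set E : Finset ℕ := (Finset.range (d + 1)).filter
    (fun j => 0 < j ∧ j < d ∧ Nat.choose d j % 2 = 1) with hE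
  have hEmem : ∀ j ∈ E, 1 ≤ j ∧ j ≤ 2 ^ m - 2 := by
    intro j hj
    rw [hE, Finset.mem_filter] at hj
    omega
  -- Step A : expansion of x^d + (x+1)^d + 1
  have stepA : ∀ x : F, x ^ d + (x + 1) ^ d + 1 = ∑ j ∈ E, x ^ j := by
    intro x
    have hexp : (x + 1) ^ d = ∑ j ∈ (Finset.range (d + 1)).filter
        (fun j => Nat.choose d j % 2 = 1), x ^ j := by
      rw [add_pow]
      simp only [one_pow, mul_one]
      rw [Finset.sum_filter]
      apply Finset.sum_congr rfl
      intro j hj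
      rw [hcast (Nat.choose d j)]
      split_ifs <;> simp
    set E' := (Finset.range (d + 1)).filter (fun j => Nat.choose d j % 2 = 1) with hE'
    have hdmem : d ∈ E' := by
      rw [hE', Finset.mem_filter]
      exact ⟨Finset.mem_range.mpr (by omega), by simp [Nat.choose_self]⟩
    have h0mem : 0 ∈ E'.erase d := by
      rw [Finset.mem_erase, hE', Finset.mem_filter]
      exact ⟨by omega, Finset.mem_range.mpr (by omega), by simp⟩
    have hsplit : ∑ j ∈ E', x ^ j = x ^ d + (1 + ∑ j ∈ (E'.erase d).erase 0, x ^ j) := by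
      rw [← Finset.add_sum_erase _ _ hdmem, ← Finset.add_sum_erase _ _ h0mem, pow_zero]
    have hEeq : (E'.erase d).erase 0 = E := by
      ext j
      simp only [Finset.mem_erase, hE', hE, Finset.mem_filter, Finset.mem_range]
      constructor
      · rintro ⟨h1, h2, h3, h4⟩
        exact ⟨h3, by omega, by omega, h4⟩
      · rintro ⟨h1, h2, h3, h4⟩
        exact ⟨by omega, by omega, h1, h4⟩
    rw [hexp, hsplit, hEeq]
    have hch : ∀ a : F, a + a = 0 := fun a => CharTwo.add_self_eq_zero a
    calc x ^ d + (x ^ d + (1 + ∑ j ∈ E, x ^ j)) + 1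
        = (x ^ d + x ^ d) + (1 + 1) + ∑ j ∈ E, x ^ j := by ring
      _ = ∑ j ∈ E, x ^ j := by rw [hch, hch, zero_add, zero_add]
  -- Step B : the polynomial
  set n := 2 ^ m - 1 with hn
  set p : Polynomial F := ∑ j ∈ E, ∑ k ∈ Finset.range m, Polynomial.X ^ ((j * 2 ^ k) % n)
    with hp
  -- exponent reduction
  have hpowmod : ∀ (x : F) (e : ℕ), 1 ≤ e % n → x ^ (e % n) = x ^ e := by
    intro x e he
    have he1 : 1 ≤ e := le_trans he (Nat.mod_le e n)
    by_cases hx : x = 0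
    · rw [hx, zero_pow (by omega), zero_pow (by omega)]
    · conv_rhs => rw [← Nat.mod_add_div e n, pow_add, pow_mul]
      have hxn : x ^ n = 1 := by
        have := FiniteField.pow_card_sub_one_eq_one x hx
        rwa [card_F m hm] at this
      rw [hxn, one_pow, mul_one]
  have heval : ∀ x : F, p.eval x = 0 := by
    intro x
    rw [hp]
    rw [Polynomial.eval_finset_sum]
    have h1 : ∀ j ∈ E, (∑ k ∈ Finset.range m,
        (Polynomial.X : Polynomial F) ^ ((j * 2 ^ k) % n)).eval x
        = ∑ k ∈ Finset.range m, (x ^ j) ^ 2 ^ k := by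
      intro j hj
      rw [Polynomial.eval_finset_sum]
      apply Finset.sum_congr rfl
      intro k _
      obtain ⟨hj1, hj2⟩ := hEmem j hj
      obtain ⟨s1, s2, s3⟩ := shift_pow hm1 hj1 hj2 k
      rw [Polynomial.eval_pow, Polynomial.eval_X, hpowmod x (j * 2 ^ k) s1, pow_mul]
    rw [Finset.sum_congr rfl h1, Finset.sum_comm]
    have h2 : ∀ k ∈ Finset.range m, (∑ j ∈ E, (x ^ j) ^ 2 ^ k)
        = (x ^ d + (x + 1) ^ d + 1) ^ 2 ^ k := by
      intro k _
      rw [stepA x, sum_pow_char_pow]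
    rw [Finset.sum_congr rfl h2]
    have := (tr_eq_zero_iff m hm (x ^ d + (x + 1) ^ d + 1)).mp (hcon x)
    exact this
  -- p = 0
  have hdeg : p.natDegree < Fintype.card F := by
    rw [card_F m hm]
    have : p.natDegree ≤ 2 ^ m - 2 := by
      rw [hp]
      apply Polynomial.natDegree_sum_le_of_forall_le
      intro j hj
      apply Polynomial.natDegree_sum_le_of_forall_le
      intro k _
      obtain ⟨hj1, hj2⟩ := hEmem j hj
      obtain ⟨s1, s2, s3⟩ := shift_pow hm1 hj1 hj2 k
      rw [Polynomial.natDegree_X_pow]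
      exact s2
    omega
  have hp0 : p = 0 :=
    Polynomial.eq_zero_of_natDegree_lt_card_of_eval_eq_zero p
      Function.injective_id (fun x => heval x) (by simpa using hdeg)
  -- Step C : coefficient count
  set T : Finset ℕ := (Finset.range n).filter (fun e => wt e = r) with hT
  have hzero : ∑ e ∈ T, p.coeff e = 0 := by
    rw [hp0]
    simp
  have hcount : ∑ e ∈ T, p.coeff e = 1 := by
    have hcoeff : ∀ e, p.coeff e = ∑ j ∈ E, ∑ k ∈ Finset.range m,
        (if e = (j * 2 ^ k) % n then (1 : F) else 0) := by
      intro e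
      rw [hp, Polynomial.finset_sum_coeff]
      apply Finset.sum_congr rfl
      intro j _
      rw [Polynomial.finset_sum_coeff]
      apply Finset.sum_congr rfl
      intro k _
      rw [Polynomial.coeff_X_pow]
    calc ∑ e ∈ T, p.coeff e
        = ∑ j ∈ E, ∑ k ∈ Finset.range m, ∑ e ∈ T,
            (if e = (j * 2 ^ k) % n then (1 : F) else 0) := by
          rw [Finset.sum_congr rfl (fun e _ => hcoeff e)]
          rw [Finset.sum_comm]
          apply Finset.sum_congr rfl
          intro j _
          rw [Finset.sum_comm]
      _ = ∑ j ∈ E, ∑ k ∈ Finset.range m, (if wt j = r then (1 : F) else 0) := by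
          apply Finset.sum_congr rfl
          intro j hj
          apply Finset.sum_congr rfl
          intro k _
          obtain ⟨hj1, hj2⟩ := hEmem j hj
          obtain ⟨s1, s2, s3⟩ := shift_pow hm1 hj1 hj2 k
          rw [Finset.sum_ite_eq' T ((j * 2 ^ k) % n) (fun _ => (1 : F))]
          have hmem : (j * 2 ^ k) % n ∈ T ↔ wt j = r := by
            rw [hT, Finset.mem_filter, Finset.mem_range, s3]
            constructor
            · rintro ⟨-, h⟩; exact h
            · intro h; exact ⟨Nat.mod_lt _ (by omega), h⟩
          by_cases hcase : wt j = r
          · rw [if_pos (hmem.mpr hcase), if_pos hcase]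
          · rw [if_neg (fun hh => hcase (hmem.mp hh)), if_neg hcase]
      _ = ∑ j ∈ E, (if wt j = r then ((m : ℕ) : F) else 0) := by
          apply Finset.sum_congr rfl
          intro j _
          rw [Finset.sum_const, Finset.card_range]
          split_ifs <;> simp
      _ = ∑ j ∈ E, (if wt j = r then (1 : F) else 0) := by
          apply Finset.sum_congr rfl
          intro j _
          rw [hcast m, if_pos (Nat.odd_iff.mp hmodd)]
      _ = ∑ j ∈ Finset.range (d + 1),
            (if Nat.choose d j % 2 = 1 ∧ wt j = r then (1 : F) else 0) := by
          rw [hE, Finset.sum_filter]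
          apply Finset.sum_congr rfl
          intro j hj
          rw [Finset.mem_range] at hj
          by_cases hj0 : j = 0
          · subst hj0
            rw [if_neg (by omega), if_neg (by rintro ⟨-, hh⟩; rw [wt_zero] at hh; omega)]
          by_cases hjd : j = d
          · subst hjd
            rw [if_neg (by omega), if_neg (by rintro ⟨-, hh⟩; rw [← hwdef] at hh; omega)]
          have : (0 < j ∧ j < d ∧ Nat.choose d j % 2 = 1) ↔
              (Nat.choose d j % 2 = 1) := by
            constructor
            · rintro ⟨-, -, h⟩; exact h
            · intro h; exact ⟨by omega, by omega, h⟩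
          by_cases hodd : Nat.choose d j % 2 = 1
          · rw [if_pos (this.mpr hodd)]
            by_cases hwt : wt j = r
            · rw [if_pos hwt, if_pos ⟨hodd, hwt⟩]
            · rw [if_neg hwt, if_neg (by rintro ⟨-, hh⟩; exact hwt hh)]
          · rw [if_neg (fun hh => hodd (this.mp hh)), if_neg (by rintro ⟨hh, -⟩; exact hodd hh)]
      _ = ((∑ j ∈ Finset.range (d + 1),
            if Nat.choose d j % 2 = 1 ∧ wt j = r then 1 else 0 : ℕ) : F) := by
          rw [Nat.cast_sum]
          apply Finset.sum_congr rfl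
          intro j _
          split_ifs <;> simp
      _ = ((Nat.choose w r : ℕ) : F) := by rw [count_submasks d r, hwdef]
      _ = 1 := by rw [hcast (Nat.choose w r), if_pos hrodd]
  rw [hzero] at hcount
  exact zero_ne_one hcount
end
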